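/- Let q > 1, h_0 > 0, and α, β, ρ, c_1, c_2, c_3 > 0 be real numbers with ρ > β and 2α ≥ β, and set h_l = q^{-l} h_0. Then there exists a constant c_4 > 0 such that for every ε with 0 < ε < e^{-1} there exist a natural number L and positive integers M_0, …, M_L satisfying: (i) c_1² h_L^{2α} + ∑_{l=0}^{L} c_2 h_l^{β} / M_l ≤ ε², and (ii) ∑_{l=0}^{L} M_l · c_3 h_l^{-ρ} ≤ c_4 · ε^{-2 - (ρ - β)/α}. -/

import Mathlib

/-- Geometric sum bound: for `x > 1`, `∑_{l<n} x^l ≤ x^n/(x-1)`. -/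
lemma mlmc_geom_bound (x : ℝ) (hx : 1 < x) (n : ℕ) :
    ∑ l : Fin n, x ^ (l : ℕ) ≤ x ^ n / (x - 1) := by
  rw [Fin.sum_univ_eq_sum_range (fun i => x ^ i) n, geom_sum_eq hx.ne' n]
  have h1 : (0:ℝ) < x - 1 := by linarith
  gcongr
  linarith

/-- MLMC complexity theorem, case `ρ > β`: with bias bound `c₁ h_L^α`, variance bound
`c₂ h_l^β`, cost bound `c₃ h_l^{-ρ}`, `h_l = q^{-l} h₀`, and `min(β,ρ) = β ≤ 2α`, for every
`0 < ε < e⁻¹` there is a choice of the number of levels `L` and sample numbers `M_l` making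
the mean-square error at most `ε²` at total cost `O(ε^{-2-(ρ-β)/α})`. -/
theorem mlmc_complexity_rho_gt_beta (q h0 α β ρ c1 c2 c3 : ℝ)
    (hq : 1 < q) (hh0 : 0 < h0) (hα : 0 < α) (hβ : 0 < β) (hρ : 0 < ρ)
    (hc1 : 0 < c1) (hc2 : 0 < c2) (hc3 : 0 < c3)
    (hρβ : β < ρ) (hαβ : β ≤ 2 * α)
    (h : ℕ → ℝ) (hh : ∀ l, h l = q ^ (-(l : ℤ)) * h0) :
    ∃ c4 > (0 : ℝ), ∀ ε : ℝ, 0 < ε → ε < Real.exp (-1) →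
      ∃ (L : ℕ) (M : Fin (L + 1) → ℕ),
        (∀ l, 0 < M l) ∧
        c1 ^ 2 * h L ^ (2 * α) + ∑ l : Fin (L + 1), c2 * h l ^ β / (M l : ℝ) ≤ ε ^ 2 ∧
        ∑ l : Fin (L + 1), (M l : ℝ) * (c3 * h l ^ (-ρ)) ≤
          c4 * ε ^ (-2 - (ρ - β) / α) := by
  have hq0 : (0:ℝ) < q := lt_trans one_pos hq
  have hlq : 0 < Real.log q := Real.log_pos hq
  have hhl : ∀ l : ℕ, 0 < h l := by
    intro l; rw [hh l]; positivity
  have hpow : ∀ (l : ℕ) (e : ℝ), h l ^ e = q ^ (-((l:ℝ) * e)) * h0 ^ e := by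
    intro l e
    rw [hh l, Real.mul_rpow (by positivity) hh0.le, ← Real.rpow_intCast q (-(l:ℤ)),
      ← Real.rpow_mul hq0.le]
    norm_num
  set A := Real.sqrt 2 * c1 * h0 ^ α with hAdef
  have hApos : 0 < A := by positivity
  set B := q ^ α * max 1 A with hBdef
  have hBpos : 0 < B := by positivity
  have hB1 : 1 ≤ B := by
    have h1 : 1 ≤ q ^ α := Real.one_le_rpow hq.le hα.le
    have h2 : 1 ≤ max 1 A := le_max_left _ _
    calc (1:ℝ) = 1 * 1 := by ring
    _ ≤ B := mul_le_mul h1 h2 zero_le_one (by positivity)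
  set r := q ^ ((ρ - β)/2) with hrdef
  have hr1 : 1 < r := (Real.one_lt_rpow_iff_of_pos hq0).mpr (Or.inl ⟨hq, by linarith⟩)
  set u := q ^ ρ with hudef
  have hu1 : 1 < u := (Real.one_lt_rpow_iff_of_pos hq0).mpr (Or.inl ⟨hq, hρ⟩)
  have hr0 : (0:ℝ) < r - 1 := by linarith
  have hu0 : (0:ℝ) < u - 1 := by linarith
  set K1 := Real.sqrt (c2*c3) * h0 ^ ((β-ρ)/2) * (r/(r-1)) with hK1def
  have hK1pos : 0 < K1 := by positivity
  set K2 := c3 * h0 ^ (-ρ) * (u/(u-1)) with hK2def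
  have hK2pos : 0 < K2 := by positivity
  refine ⟨2*K1^2 * B^((ρ-β)/α) + K2 * B^(ρ/α), by positivity, ?_⟩
  intro ε hε hεe
  have hε1 : ε < 1 := hεe.trans (by
    rw [← Real.exp_zero]; exact Real.exp_lt_exp.mpr (by norm_num))
  set x := Real.log (A/ε) / (α * Real.log q) with hxdef
  set L := ⌈x⌉₊ with hLdef
  set P := q ^ ((L:ℝ) * α) with hPdef
  have hPpos : 0 < P := by positivity
  have hPexp : P = Real.exp ((L:ℝ) * α * Real.log q) := by
    rw [hPdef, Real.rpow_def_of_pos hq0]; ring_nf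
  have key_lo : A / ε ≤ P := by
    rcases le_or_gt (Real.log (A/ε)) 0 with hc | hc
    · have h1 : A/ε ≤ 1 := by
        have h2 := Real.exp_le_exp.mpr hc
        rwa [Real.exp_log (by positivity), Real.exp_zero] at h2
      exact h1.trans (Real.one_le_rpow hq.le (by positivity))
    · have hLx : x ≤ (L:ℝ) := Nat.le_ceil x
      have h3 : Real.log (A/ε) ≤ (L:ℝ) * α * Real.log q := by
        have h4 := mul_le_mul_of_nonneg_right hLx
          (le_of_lt (by positivity : (0:ℝ) < α * Real.log q))
        rw [hxdef, div_mul_cancel₀ _ (by positivity : α * Real.log q ≠ 0)] at h4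
        linarith [h4]
      calc A/ε = Real.exp (Real.log (A/ε)) := (Real.exp_log (by positivity)).symm
      _ ≤ Real.exp ((L:ℝ)*α * Real.log q) := Real.exp_le_exp.mpr h3
      _ = P := hPexp.symm
  have key_hi : P ≤ B / ε := by
    rcases le_or_gt 0 x with hc | hc
    · have hLx : (L:ℝ) < x + 1 := Nat.ceil_lt_add_one hc
      have h2 : x * (α*Real.log q) = Real.log (A/ε) := by
        rw [hxdef, div_mul_cancel₀ _ (by positivity : α * Real.log q ≠ 0)]
      have h1 : (L:ℝ)*α*Real.log q ≤ Real.log (A/ε) + α * Real.log q := by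
        have h5 := mul_le_mul_of_nonneg_right hLx.le
          (le_of_lt (by positivity : (0:ℝ) < α * Real.log q))
        rw [add_mul, one_mul, h2] at h5
        linarith [h5]
      have h3 : P ≤ (A/ε) * q^α := by
        calc P = Real.exp ((L:ℝ)*α*Real.log q) := hPexp
        _ ≤ Real.exp (Real.log (A/ε) + α*Real.log q) := Real.exp_le_exp.mpr h1
        _ = (A/ε) * q^α := by
            rw [Real.exp_add, Real.exp_log (by positivity),
              Real.rpow_def_of_pos hq0]
            ring_nf
      refine h3.trans ?_
      rw [hBdef, div_mul_eq_mul_div, mul_comm A (q^α)]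
      gcongr
      exact le_max_right 1 A
    · have hL0 : L = 0 := Nat.ceil_eq_zero.mpr hc.le
      rw [hPdef, hL0]
      push_cast
      rw [zero_mul, Real.rpow_zero]
      rw [le_div_iff₀ hε, one_mul]
      exact hε1.le.trans hB1
  have hPe : ∀ c : ℝ, q ^ ((L:ℝ) * c) = P ^ (c / α) := by
    intro c
    rw [hPdef, ← Real.rpow_mul hq0.le]
    congr 1
    field_simp
  -- bias bound
  have h2α : h0 ^ (2*α) = (h0 ^ α)^2 := by
    rw [← Real.rpow_natCast (h0 ^ α) 2, ← Real.rpow_mul hh0.le]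
    norm_num [mul_comm]
  have hA2 : A^2 = 2 * (c1^2 * (h0^α)^2) := by
    rw [hAdef, mul_pow, mul_pow, Real.sq_sqrt (by norm_num : (0:ℝ) ≤ 2)]
    ring
  have hbias : c1^2 * h L ^ (2*α) ≤ ε^2/2 := by
    have e1 : h L ^ (2*α) = h0 ^ (2*α) / P^2 := by
      rw [hpow L (2*α), Real.rpow_neg hq0.le, hPe (2*α),
        show (2*α)/α = (2:ℝ) by field_simp, Real.rpow_two]
      ring
    have hP2 : (A/ε)^2 ≤ P^2 := pow_le_pow_left₀ (by positivity) key_lo 2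
    calc c1^2 * h L ^ (2*α) = c1^2 * (h0^(2*α) / P^2) := by rw [e1]
    _ ≤ c1^2 * (h0^(2*α) / (A/ε)^2) := by gcongr
    _ = ε^2/2 := by
        rw [div_pow, hA2, h2α]
        field_simp
  -- geometric representations
  have hgl : ∀ l : ℕ, Real.sqrt (c2*c3) * h l ^ ((β-ρ)/2)
      = (Real.sqrt (c2*c3) * h0 ^ ((β-ρ)/2)) * r ^ l := by
    intro l
    rw [hpow l ((β-ρ)/2)]
    have e : q ^ (-((l:ℝ) * ((β-ρ)/2))) = r ^ l := by
      rw [← Real.rpow_natCast r l, hrdef, ← Real.rpow_mul hq0.le]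
      ring_nf
    rw [e]; ring
  have hul : ∀ l : ℕ, c3 * h l ^ (-ρ) = (c3 * h0 ^ (-ρ)) * u ^ l := by
    intro l
    rw [hpow l (-ρ)]
    have e : q ^ (-((l:ℝ) * (-ρ))) = u ^ l := by
      rw [← Real.rpow_natCast u l, hudef, ← Real.rpow_mul hq0.le]
      ring_nf
    rw [e]; ring
  -- the sample numbers
  set g : ℕ → ℝ := fun l => Real.sqrt (c2*c3) * h l ^ ((β-ρ)/2) with hgdef
  have hgpos : ∀ l : ℕ, 0 < g l := by
    intro l
    simp only [hgdef]
    have := hhl l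
    positivity
  set S := ∑ l : Fin (L+1), g l with hSdef
  have hSpos : 0 < S := Finset.sum_pos (fun l _ => hgpos l) Finset.univ_nonempty
  set D : ℕ → ℝ := fun l => 2/ε^2 * (Real.sqrt (c2/c3) * h l ^ ((β+ρ)/2) * S) with hDdef
  have hDpos : ∀ l : ℕ, 0 < D l := by
    intro l
    simp only [hDdef]
    have := hhl l
    positivity
  clear_value x L P g S D
  refine ⟨L, fun l => ⌈D l⌉₊, fun l => Nat.ceil_pos.mpr (hDpos l), ?_, ?_⟩
  · -- error bound
    have hterm : ∀ l : Fin (L+1), c2 * h ↑l ^ β / ((⌈D ↑l⌉₊ : ℝ)) ≤ ε^2/(2*S) * g ↑l := by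
      intro l
      have hMD : D ↑l ≤ (⌈D ↑l⌉₊ : ℝ) := Nat.le_ceil _
      have e1 : c2 * h ↑l ^ β = D ↑l * (ε^2/(2*S) * g ↑l) := by
        simp only [hDdef, hgdef]
        have h1 : Real.sqrt (c2/c3) * Real.sqrt (c2*c3) = c2 := by
          rw [← Real.sqrt_mul (by positivity),
            show c2/c3*(c2*c3) = c2^2 by field_simp, Real.sqrt_sq hc2.le]
        have h2 : h ↑l ^ ((β+ρ)/2) * h ↑l ^ ((β-ρ)/2) = h ↑l ^ β := by
          rw [← Real.rpow_add (hhl ↑l)]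
          ring_nf
        calc c2 * h ↑l ^ β
            = (Real.sqrt (c2/c3) * Real.sqrt (c2*c3)) * (h ↑l ^ ((β+ρ)/2) * h ↑l ^ ((β-ρ)/2)) := by
              rw [h1, h2]
        _ = 2/ε^2 * (Real.sqrt (c2/c3) * h ↑l ^ ((β+ρ)/2) * S) *
              (ε^2/(2*S) * (Real.sqrt (c2*c3) * h ↑l ^ ((β-ρ)/2))) := by
              field_simp
      calc c2 * h ↑l ^ β / ((⌈D ↑l⌉₊ : ℝ)) ≤ c2 * h ↑l ^ β / D ↑l := by
            gcongr
            · have := hhl (↑l : ℕ); positivity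
            · exact hDpos ↑l
      _ = ε^2/(2*S) * g ↑l := by
            rw [e1, mul_comm, mul_div_assoc, div_self (hDpos ↑l).ne', mul_one]
    have hsum : ∑ l : Fin (L+1), c2 * h ↑l ^ β / ((⌈D ↑l⌉₊ : ℝ)) ≤ ε^2/2 := by
      calc ∑ l : Fin (L+1), c2 * h ↑l ^ β / ((⌈D ↑l⌉₊ : ℝ))
          ≤ ∑ l : Fin (L+1), ε^2/(2*S) * g ↑l := Finset.sum_le_sum fun l _ => hterm l
      _ = ε^2/(2*S) * S := by rw [← Finset.mul_sum, hSdef]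
      _ = ε^2/2 := by field_simp
    linarith [hbias, hsum]
  · -- cost bound
    have hrL : (r:ℝ) ^ L = P ^ ((ρ-β)/(2*α)) := by
      rw [← Real.rpow_natCast r L, hrdef, ← Real.rpow_mul hq0.le,
        show (ρ-β)/2 * (L:ℝ) = (L:ℝ) * ((ρ-β)/2) by ring, hPe]
      congr 1
      rw [div_div]
    have huL : (u:ℝ) ^ L = P ^ (ρ/α) := by
      rw [← Real.rpow_natCast u L, hudef, ← Real.rpow_mul hq0.le,
        show ρ * (L:ℝ) = (L:ℝ) * ρ by ring, hPe]
    have hS_le : S ≤ K1 * P ^ ((ρ-β)/(2*α)) := by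
      rw [← hrL]
      calc S = (Real.sqrt (c2*c3) * h0 ^ ((β-ρ)/2)) * ∑ l : Fin (L+1), r ^ (l:ℕ) := by
            rw [hSdef, Finset.mul_sum]
            exact Finset.sum_congr rfl fun l _ => by simp only [hgdef]; rw [hgl ↑l]
      _ ≤ (Real.sqrt (c2*c3) * h0 ^ ((β-ρ)/2)) * (r^(L+1)/(r-1)) :=
            mul_le_mul_of_nonneg_left (mlmc_geom_bound r hr1 (L+1)) (by positivity)
      _ = K1 * r ^ L := by rw [hK1def, pow_succ]; ring
    have hterm : ∀ l : Fin (L+1), ((⌈D ↑l⌉₊:ℝ)) * (c3 * h ↑l ^ (-ρ))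
        ≤ 2/ε^2 * S * g ↑l + (c3 * h0 ^ (-ρ)) * u ^ (l:ℕ) := by
      intro l
      have hM1 : ((⌈D ↑l⌉₊:ℝ)) ≤ D ↑l + 1 := (Nat.ceil_lt_add_one (hDpos ↑l).le).le
      have hC : 0 < c3 * h ↑l ^ (-ρ) := by have := hhl (↑l:ℕ); positivity
      have e2 : D ↑l * (c3 * h ↑l ^ (-ρ)) = 2/ε^2 * S * g ↑l := by
        simp only [hDdef, hgdef]
        have h1 : Real.sqrt (c2/c3) * c3 = Real.sqrt (c2*c3) := by
          rw [show Real.sqrt (c2/c3) * c3 = Real.sqrt (c2/c3) * Real.sqrt (c3^2) by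
              rw [Real.sqrt_sq hc3.le],
            ← Real.sqrt_mul (by positivity),
            show c2/c3*c3^2 = c2*c3 by
              rw [div_mul_eq_mul_div, div_eq_iff hc3.ne']; ring]
        have h2 : h ↑l ^ ((β+ρ)/2) * h ↑l ^ (-ρ) = h ↑l ^ ((β-ρ)/2) := by
          rw [← Real.rpow_add (hhl ↑l)]
          ring_nf
        calc 2/ε^2 * (Real.sqrt (c2/c3) * h ↑l ^ ((β+ρ)/2) * S) * (c3 * h ↑l ^ (-ρ))
            = 2/ε^2 * S * ((Real.sqrt (c2/c3) * c3) * (h ↑l ^ ((β+ρ)/2) * h ↑l ^ (-ρ))) := by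
              ring
        _ = 2/ε^2 * S * (Real.sqrt (c2*c3) * h ↑l ^ ((β-ρ)/2)) := by rw [h1, h2]
      calc ((⌈D ↑l⌉₊:ℝ)) * (c3 * h ↑l ^ (-ρ)) ≤ (D ↑l + 1) * (c3 * h ↑l ^ (-ρ)) :=
            mul_le_mul_of_nonneg_right hM1 hC.le
      _ = D ↑l * (c3 * h ↑l ^ (-ρ)) + c3 * h ↑l ^ (-ρ) := by ring
      _ = 2/ε^2 * S * g ↑l + (c3 * h0 ^ (-ρ)) * u ^ (l:ℕ) := by rw [e2, hul ↑l]
    have hcost1 : ∑ l : Fin (L+1), ((⌈D ↑l⌉₊:ℝ)) * (c3 * h ↑l ^ (-ρ))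
        ≤ 2/ε^2 * S^2 + K2 * P ^ (ρ/α) := by
      calc ∑ l : Fin (L+1), ((⌈D ↑l⌉₊:ℝ)) * (c3 * h ↑l ^ (-ρ))
          ≤ ∑ l : Fin (L+1), (2/ε^2 * S * g ↑l + (c3 * h0 ^ (-ρ)) * u ^ (l:ℕ)) :=
            Finset.sum_le_sum fun l _ => hterm l
      _ = 2/ε^2 * S * S + (c3 * h0 ^ (-ρ)) * ∑ l : Fin (L+1), u ^ (l:ℕ) := by
            rw [Finset.sum_add_distrib]
            congr 1
            · rw [← Finset.mul_sum, ← hSdef]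
            · rw [← Finset.mul_sum]
      _ ≤ 2/ε^2 * S * S + (c3 * h0 ^ (-ρ)) * (u^(L+1)/(u-1)) := by
            gcongr
            exact mlmc_geom_bound u hu1 (L+1)
      _ = 2/ε^2 * S^2 + K2 * u ^ L := by rw [hK2def, pow_succ]; ring
      _ = 2/ε^2 * S^2 + K2 * P ^ (ρ/α) := by rw [huL]
    have he1 : (0:ℝ) ≤ (ρ-β)/α := by
      have : (0:ℝ) < ρ - β := by linarith
      positivity
    have hS2 : S^2 ≤ K1^2 * P ^ ((ρ-β)/α) := by
      have hexp : (ρ-β)/(2*α) * 2 = (ρ-β)/α := by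
        rw [div_mul_eq_mul_div, mul_comm 2 α, mul_div_mul_right _ _ (two_ne_zero)]
      have hsq : (P ^ ((ρ-β)/(2*α)))^2 = P ^ ((ρ-β)/(2*α) * 2) := by
        rw [← Real.rpow_natCast (P ^ ((ρ-β)/(2*α))) 2, ← Real.rpow_mul hPpos.le]
        norm_num
      have h5 : S^2 ≤ (K1 * P ^ ((ρ-β)/(2*α)))^2 := pow_le_pow_left₀ hSpos.le hS_le 2
      refine h5.trans_eq ?_
      rw [mul_pow, hsq, hexp]
    have hPB1 : P ^ ((ρ-β)/α) ≤ B ^ ((ρ-β)/α) * ε ^ (-((ρ-β)/α)) := by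
      calc P ^ ((ρ-β)/α) ≤ (B/ε) ^ ((ρ-β)/α) :=
            Real.rpow_le_rpow hPpos.le key_hi he1
      _ = B ^ ((ρ-β)/α) * ε ^ (-((ρ-β)/α)) := by
            rw [Real.div_rpow hBpos.le hε.le, Real.rpow_neg hε.le, div_eq_mul_inv]
    have hPB2 : P ^ (ρ/α) ≤ B ^ (ρ/α) * ε ^ (-(ρ/α)) := by
      calc P ^ (ρ/α) ≤ (B/ε) ^ (ρ/α) :=
            Real.rpow_le_rpow hPpos.le key_hi (by positivity)
      _ = B ^ (ρ/α) * ε ^ (-(ρ/α)) := by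
            rw [Real.div_rpow hBpos.le hε.le, Real.rpow_neg hε.le, div_eq_mul_inv]
    have hεsplit : ε ^ (-2 - (ρ-β)/α) = ε ^ (-((ρ-β)/α)) / ε^2 := by
      rw [show -2 - (ρ-β)/α = -((ρ-β)/α) - 2 by ring, Real.rpow_sub hε, Real.rpow_two]
    have hεmono : ε ^ (-(ρ/α)) ≤ ε ^ (-2 - (ρ-β)/α) := by
      apply Real.rpow_le_rpow_of_exponent_ge hε hε1.le
      have hβα : β/α ≤ 2 := by rw [div_le_iff₀ hα]; linarith
      have hsd : (ρ-β)/α = ρ/α - β/α := by ring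
      linarith [hsd, hβα]
    have t1 : 2/ε^2 * S^2 ≤ (2*K1^2*B^((ρ-β)/α)) * ε ^ (-2-(ρ-β)/α) := by
      calc 2/ε^2 * S^2
          ≤ 2/ε^2 * (K1^2 * (B^((ρ-β)/α) * ε ^ (-((ρ-β)/α)))) :=
            mul_le_mul_of_nonneg_left
              (hS2.trans (mul_le_mul_of_nonneg_left hPB1 (by positivity)))
              (by positivity)
      _ = (2*K1^2*B^((ρ-β)/α)) * (ε ^ (-((ρ-β)/α)) / ε^2) := by ring
      _ = (2*K1^2*B^((ρ-β)/α)) * ε ^ (-2-(ρ-β)/α) := by rw [hεsplit]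
    have t2 : K2 * P ^ (ρ/α) ≤ (K2*B^(ρ/α)) * ε ^ (-2-(ρ-β)/α) := by
      calc K2 * P ^ (ρ/α) ≤ K2 * (B^(ρ/α) * ε ^ (-(ρ/α))) :=
            mul_le_mul_of_nonneg_left hPB2 hK2pos.le
      _ = (K2*B^(ρ/α)) * ε ^ (-(ρ/α)) := by ring
      _ ≤ (K2*B^(ρ/α)) * ε ^ (-2-(ρ-β)/α) :=
            mul_le_mul_of_nonneg_left hεmono (by positivity)
    calc ∑ l : Fin (L+1), ((⌈D ↑l⌉₊:ℝ)) * (c3 * h ↑l ^ (-ρ))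
        ≤ 2/ε^2 * S^2 + K2 * P ^ (ρ/α) := hcost1
    _ ≤ (2*K1^2*B^((ρ-β)/α)) * ε ^ (-2-(ρ-β)/α) + (K2*B^(ρ/α)) * ε ^ (-2-(ρ-β)/α) :=
          add_le_add t1 t2
    _ = (2*K1^2 * B^((ρ-β)/α) + K2 * B^(ρ/α)) * ε ^ (-2 - (ρ - β)/α) := by ring
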